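/- arXiv:1612.04541 — 2 statements merged into one kernel-verified Lean document; each statement's English description precedes it below -/
import Mathlib

section
/- (Lemma 3.1) Assume a₀₀ ≠ 0 and define c = a₁ − (a₀₁/a₀₀)a₀, l = a₂ − (a₀₂/a₀₀)a₀, and h = a₃ − (a₀₃/a₀₀)a₀. Then: ⟨c,c⟩ = ⟨c,a₁⟩ = (a₁₁a₀₀ − a₀₁²)/a₀₀ = a₁₁/a₀₀ = sin²(π/w)/(sin²(π/w) − cos²(π/v)); ⟨l,l⟩ = ⟨l,a₂⟩ = (a₂₂a₀₀ − a₀₂²)/a₀₀ = 1/(B·a₀₀) = 1/(sin²(π/w) − cos²(π/v)); and ⟨h,h⟩ = ⟨h,a₃⟩ = (a₃₃a₀₀ − a₀₃²)/a₀₀ = sin²(π/v)/(B·a₀₀) = sin²(π/v)/(sin²(π/w) − cos²(π/v)). -/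
open Real Matrix

/-- The Coxeter–Schläfli matrix of the complete orthoscheme `W_{uvw}`. -/
noncomputable def CSmatrix (u v w : ℝ) : Matrix (Fin 4) (Fin 4) ℝ :=
  !![1, -cos (π/u), 0, 0;
     -cos (π/u), 1, -cos (π/v), 0;
     0, -cos (π/v), 1, -cos (π/w);
     0, 0, -cos (π/w), 1]

/-- The inverse of the Coxeter–Schläfli matrix; its entries are the `a_{ij}`. -/
noncomputable def CSinv (u v w : ℝ) : Matrix (Fin 4) (Fin 4) ℝ :=
  (CSmatrix u v w)⁻¹

noncomputable def CSN (u v w : ℝ) : Matrix (Fin 4) (Fin 4) ℝ :=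
  let x := cos (π/u); let y := cos (π/v); let z := cos (π/w)
  !![1-y^2-z^2, x*(1-z^2), x*y, x*y*z;
     x*(1-z^2), 1-z^2, y, y*z;
     x*y, y, 1-x^2, z*(1-x^2);
     x*y*z, y*z, z*(1-x^2), 1-x^2-y^2]

lemma CSdet (u v w : ℝ) :
    (CSmatrix u v w).det =
      1 - cos (π/u)^2 - cos (π/v)^2 - cos (π/w)^2 + cos (π/u)^2 * cos (π/w)^2 := by
  simp [CSmatrix, Matrix.det_succ_row_zero, Fin.sum_univ_succ, Fin.succAbove]
  ring

lemma CSinv_eq (u v w : ℝ) (hdet : (CSmatrix u v w).det ≠ 0) :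
    CSinv u v w = (CSmatrix u v w).det⁻¹ • CSN u v w := by
  rw [CSinv]
  apply Matrix.inv_eq_right_inv
  rw [CSdet] at hdet ⊢
  have hdet' : 1 - cos (π / u) ^ 2 - cos (π / v) ^ 2 - cos (π / w) ^ 2 +
      cos (π / w) ^ 2 * cos (π / u) ^ 2 ≠ 0 := by
    intro h0; apply hdet; linarith
  ext i j
  fin_cases i <;> fin_cases j <;>
    simp [CSmatrix, CSN, Matrix.mul_apply, Fin.sum_univ_four] <;>
    field_simp <;> ring

set_option maxHeartbeats 1000000 in
theorem stmt3 (u v w : ℝ) (hu : 3 ≤ u) (hv : 3 ≤ v) (hw : 3 ≤ w)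
    (hdet : (CSmatrix u v w).det ≠ 0)
    {V : Type*} [AddCommGroup V] [Module ℝ V]
    (Bf : LinearMap.BilinForm ℝ V)
    (hsymm : ∀ x y : V, Bf x y = Bf y x)
    (a : Fin 4 → V)
    (hGram : ∀ i j : Fin 4, Bf (a i) (a j) = CSinv u v w i j)
    (h00 : CSinv u v w 0 0 ≠ 0)
    (c l h : V)
    (hc : c = a 1 - (CSinv u v w 0 1 / CSinv u v w 0 0) • a 0)
    (hl : l = a 2 - (CSinv u v w 0 2 / CSinv u v w 0 0) • a 0)
    (hh : h = a 3 - (CSinv u v w 0 3 / CSinv u v w 0 0) • a 0) :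
    (Bf c c = Bf c (a 1) ∧
      Bf c (a 1) =
        (CSinv u v w 1 1 * CSinv u v w 0 0 - (CSinv u v w 0 1) ^ 2) / CSinv u v w 0 0 ∧
      (CSinv u v w 1 1 * CSinv u v w 0 0 - (CSinv u v w 0 1) ^ 2) / CSinv u v w 0 0 =
        CSinv u v w 1 1 / CSinv u v w 0 0 ∧
      CSinv u v w 1 1 / CSinv u v w 0 0 =
        sin (π/w) ^ 2 / (sin (π/w) ^ 2 - cos (π/v) ^ 2)) ∧
    (Bf l l = Bf l (a 2) ∧
      Bf l (a 2) =
        (CSinv u v w 2 2 * CSinv u v w 0 0 - (CSinv u v w 0 2) ^ 2) / CSinv u v w 0 0 ∧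
      (CSinv u v w 2 2 * CSinv u v w 0 0 - (CSinv u v w 0 2) ^ 2) / CSinv u v w 0 0 =
        1 / ((CSmatrix u v w).det * CSinv u v w 0 0) ∧
      1 / ((CSmatrix u v w).det * CSinv u v w 0 0) =
        1 / (sin (π/w) ^ 2 - cos (π/v) ^ 2)) ∧
    (Bf h h = Bf h (a 3) ∧
      Bf h (a 3) =
        (CSinv u v w 3 3 * CSinv u v w 0 0 - (CSinv u v w 0 3) ^ 2) / CSinv u v w 0 0 ∧
      (CSinv u v w 3 3 * CSinv u v w 0 0 - (CSinv u v w 0 3) ^ 2) / CSinv u v w 0 0 =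
        sin (π/v) ^ 2 / ((CSmatrix u v w).det * CSinv u v w 0 0) ∧
      sin (π/v) ^ 2 / ((CSmatrix u v w).det * CSinv u v w 0 0) =
        sin (π/v) ^ 2 / (sin (π/w) ^ 2 - cos (π/v) ^ 2)) := by
  have hi := CSinv_eq u v w hdet
  set x := cos (π/u) with hx
  set y := cos (π/v) with hy
  set z := cos (π/w) with hz
  set D := (CSmatrix u v w).det with hD
  have hDval : D = 1 - x^2 - y^2 - z^2 + x^2*z^2 := CSdet u v w
  have e00 : CSinv u v w 0 0 = D⁻¹ * (1-y^2-z^2) := by rw [hi]; simp [CSN]; exact Or.inl rfl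
  have e01 : CSinv u v w 0 1 = D⁻¹ * (x*(1-z^2)) := by rw [hi]; simp [CSN]; exact Or.inl rfl
  have e10 : CSinv u v w 1 0 = D⁻¹ * (x*(1-z^2)) := by rw [hi]; simp [CSN]; exact Or.inl rfl
  have e11 : CSinv u v w 1 1 = D⁻¹ * (1-z^2) := by rw [hi]; simp [CSN]; exact Or.inl rfl
  have e02 : CSinv u v w 0 2 = D⁻¹ * (x*y) := by rw [hi]; simp [CSN]; exact Or.inl rfl
  have e20 : CSinv u v w 2 0 = D⁻¹ * (x*y) := by rw [hi]; simp [CSN]; exact Or.inl rfl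
  have e22 : CSinv u v w 2 2 = D⁻¹ * (1-x^2) := by rw [hi]; simp [CSN]; exact Or.inl rfl
  have e03 : CSinv u v w 0 3 = D⁻¹ * (x*y*z) := by rw [hi]; simp [CSN]; exact Or.inl rfl
  have e30 : CSinv u v w 3 0 = D⁻¹ * (x*y*z) := by rw [hi]; simp [CSN]; exact Or.inl rfl
  have e33 : CSinv u v w 3 3 = D⁻¹ * (1-x^2-y^2) := by rw [hi]; simp [CSN]; exact Or.inl rfl
  have hq : (1:ℝ)-y^2-z^2 ≠ 0 := fun hq0 => h00 (by rw [e00, hq0, mul_zero])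
  have hDpoly : (1:ℝ) - x^2 - y^2 - z^2 + x^2*z^2 ≠ 0 := hDval ▸ hdet
  have hsw : sin (π/w) ^ 2 = 1 - z^2 := by rw [hz, sin_sq]
  have hsv : sin (π/v) ^ 2 = 1 - y^2 := by rw [hy, sin_sq]
  have key : ∀ (i : Fin 4) (e : V) (P Q : ℝ),
      e = a i - (CSinv u v w 0 i / CSinv u v w 0 0) • a 0 →
      CSinv u v w 0 i = P → CSinv u v w i 0 = P → CSinv u v w i i = Q →
      Bf e e = Bf e (a i) ∧
      Bf e (a i) = (Q * CSinv u v w 0 0 - P ^ 2) / CSinv u v w 0 0 := by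
    intro i e P Q he hP hP' hQ
    have h1 : Bf e (a 0) = 0 := by
      rw [he]
      simp only [map_sub, LinearMap.map_smul, LinearMap.sub_apply,
        LinearMap.smul_apply, smul_eq_mul, hGram]
      rw [hP', hP]
      rw [div_mul_cancel₀ _ h00, sub_self]
    have h2 : Bf e (a i) = (Q * CSinv u v w 0 0 - P ^ 2) / CSinv u v w 0 0 := by
      rw [he]
      simp only [map_sub, LinearMap.map_smul, LinearMap.sub_apply,
        LinearMap.smul_apply, smul_eq_mul, hGram]
      rw [hP, hQ]
      field_simp
    refine ⟨?_, h2⟩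
    nth_rewrite 2 [he]
    rw [map_sub, LinearMap.map_smul, smul_eq_mul, h1, mul_zero, sub_zero]
  refine ⟨?_, ?_, ?_⟩
  · obtain ⟨k1, k2⟩ := key 1 c _ _ hc rfl (e10.trans e01.symm) rfl
    refine ⟨k1, k2, ?_, ?_⟩
    · rw [e00, e01, e11]
      field_simp
      rw [hDval]; ring
    · rw [e00, e11, hsw, mul_div_mul_left _ _ (inv_ne_zero hdet)]
      ring_nf
  · obtain ⟨k1, k2⟩ := key 2 l _ _ hl rfl (e20.trans e02.symm) rfl
    refine ⟨k1, k2, ?_, ?_⟩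
    · rw [e00, e02, e22, hDval]
      field_simp
      all_goals try ring
      all_goals exact Or.inl trivial
    · rw [e00, hsw, mul_inv_cancel_left₀ hdet]
      ring_nf
  · obtain ⟨k1, k2⟩ := key 3 h _ _ hh rfl (e30.trans e03.symm) rfl
    refine ⟨k1, k2, ?_, ?_⟩
    · rw [e00, e03, e33, hsv, hDval]
      field_simp
      all_goals try ring
      all_goals exact Or.inl trivial
    · rw [e00, hsw, mul_inv_cancel_left₀ hdet]
      ring_nf
end

section
/- (Distance formula (4.4), segment A₃F₁₂) Assume u = w, B < 0, and sin²(π/u) > cos²(π/v) (so a₃₃ < 0 and a₁₂ + a₂₂ < 0). Then for the midpoint vector f₁₂ = a₁ + a₂ one has −⟨a₃, f₁₂⟩/√(⟨a₃,a₃⟩·⟨f₁₂,f₁₂⟩) = −(a₁₃ + a₂₃)/√(2·a₃₃·(a₁₂ + a₂₂)) = √(1/2 + (a₀₃ − 1)/(2a₃₃)). (This quantity is cosh of the hyperbolic distance from the vertex A₃ to the point F₁₂ of W_{uvw}.) -/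
open Real Matrix

lemma csdet_eq (u v : ℝ) :
    (CSmatrix u v u).det = (1 - cos (π/u)^2)^2 - cos (π/v)^2 := by
  simp [CSmatrix, Matrix.det_succ_row_zero, Fin.sum_univ_succ, Fin.succAbove]
  ring

lemma csinv_eq (u v : ℝ) (hdet : (CSmatrix u v u).det ≠ 0) :
    CSinv u v u = ((1 - cos (π/u)^2)^2 - cos (π/v)^2)⁻¹ •
      !![1 - cos (π/u)^2 - cos (π/v)^2, cos (π/u)*(1 - cos (π/u)^2), cos (π/u)*cos (π/v), cos (π/u)^2*cos (π/v);
         cos (π/u)*(1 - cos (π/u)^2), 1 - cos (π/u)^2, cos (π/v), cos (π/u)*cos (π/v);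
         cos (π/u)*cos (π/v), cos (π/v), 1 - cos (π/u)^2, cos (π/u)*(1 - cos (π/u)^2);
         cos (π/u)^2*cos (π/v), cos (π/u)*cos (π/v), cos (π/u)*(1 - cos (π/u)^2), 1 - cos (π/u)^2 - cos (π/v)^2] := by
  have hB : ((1 - cos (π/u)^2)^2 - cos (π/v)^2) ≠ 0 := csdet_eq u v ▸ hdet
  apply Matrix.inv_eq_right_inv
  ext i j
  fin_cases i <;> fin_cases j <;>
    simp [CSmatrix, Matrix.mul_apply, Matrix.one_apply, Fin.sum_univ_four, Matrix.smul_apply] <;>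
    field_simp <;> ring

section entries
variable (u v : ℝ)

lemma cse33 (hdet : (CSmatrix u v u).det ≠ 0) : CSinv u v u 3 3 = (1 - cos (π/u)^2 - cos (π/v)^2)/((1 - cos (π/u)^2)^2 - cos (π/v)^2) := by
  rw [csinv_eq u v hdet]; simp [Matrix.smul_apply]; ring
lemma cse11 (hdet : (CSmatrix u v u).det ≠ 0) : CSinv u v u 1 1 = (1 - cos (π/u)^2)/((1 - cos (π/u)^2)^2 - cos (π/v)^2) := by
  rw [csinv_eq u v hdet]; simp [Matrix.smul_apply]; ring
lemma cse22 (hdet : (CSmatrix u v u).det ≠ 0) : CSinv u v u 2 2 = (1 - cos (π/u)^2)/((1 - cos (π/u)^2)^2 - cos (π/v)^2) := by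
  rw [csinv_eq u v hdet]; simp [Matrix.smul_apply]; ring
lemma cse12 (hdet : (CSmatrix u v u).det ≠ 0) : CSinv u v u 1 2 = cos (π/v)/((1 - cos (π/u)^2)^2 - cos (π/v)^2) := by
  rw [csinv_eq u v hdet]; simp [Matrix.smul_apply]; ring
lemma cse21 (hdet : (CSmatrix u v u).det ≠ 0) : CSinv u v u 2 1 = cos (π/v)/((1 - cos (π/u)^2)^2 - cos (π/v)^2) := by
  rw [csinv_eq u v hdet]; simp [Matrix.smul_apply]; ring
lemma cse13 (hdet : (CSmatrix u v u).det ≠ 0) : CSinv u v u 1 3 = cos (π/u)*cos (π/v)/((1 - cos (π/u)^2)^2 - cos (π/v)^2) := by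
  rw [csinv_eq u v hdet]; simp [Matrix.smul_apply]; ring
lemma cse31 (hdet : (CSmatrix u v u).det ≠ 0) : CSinv u v u 3 1 = cos (π/u)*cos (π/v)/((1 - cos (π/u)^2)^2 - cos (π/v)^2) := by
  rw [csinv_eq u v hdet]; simp [Matrix.smul_apply]; ring
lemma cse23 (hdet : (CSmatrix u v u).det ≠ 0) : CSinv u v u 2 3 = cos (π/u)*(1 - cos (π/u)^2)/((1 - cos (π/u)^2)^2 - cos (π/v)^2) := by
  rw [csinv_eq u v hdet]; simp [Matrix.smul_apply]; ring
lemma cse32 (hdet : (CSmatrix u v u).det ≠ 0) : CSinv u v u 3 2 = cos (π/u)*(1 - cos (π/u)^2)/((1 - cos (π/u)^2)^2 - cos (π/v)^2) := by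
  rw [csinv_eq u v hdet]; simp [Matrix.smul_apply]; ring
lemma cse03 (hdet : (CSmatrix u v u).det ≠ 0) : CSinv u v u 0 3 = cos (π/u)^2*cos (π/v)/((1 - cos (π/u)^2)^2 - cos (π/v)^2) := by
  rw [csinv_eq u v hdet]; simp [Matrix.smul_apply]; ring

end entries

/-- Pure real-number computation for the final square-root identity. -/
lemma sqrt_key (c d : ℝ) (hc : 0 < c) (hd : 0 < d)
    (hk1 : 0 < 1 - c^2 - d^2) (hBneg : (1 - c^2)^2 - d^2 < 0) :
    -(c*d/((1 - c^2)^2 - d^2) + c*(1 - c^2)/((1 - c^2)^2 - d^2)) /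
      Real.sqrt (2 * ((1 - c^2 - d^2)/((1 - c^2)^2 - d^2)) *
        (d/((1 - c^2)^2 - d^2) + (1 - c^2)/((1 - c^2)^2 - d^2))) =
    Real.sqrt (1/2 + (c^2*d/((1 - c^2)^2 - d^2) - 1) / (2 * ((1 - c^2 - d^2)/((1 - c^2)^2 - d^2)))) := by
  have hBne : (1 - c^2)^2 - d^2 ≠ 0 := ne_of_lt hBneg
  have hk2 : 0 < d + (1 - c^2) := by nlinarith
  set B : ℝ := (1 - c^2)^2 - d^2
  have hrpos : 0 < 2 * ((1 - c^2 - d^2)/B) * (d/B + (1 - c^2)/B) := by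
    have hx : (1 - c^2 - d^2)/B < 0 := div_neg_of_pos_of_neg hk1 hBneg
    have hy : d/B + (1 - c^2)/B < 0 := by
      rw [← add_div]; exact div_neg_of_pos_of_neg hk2 hBneg
    nlinarith
  have hnum : 0 ≤ -(c*d/B + c*(1 - c^2)/B) := by
    have h : c*d/B + c*(1 - c^2)/B = c*(d + (1 - c^2))/B := by ring
    rw [h]
    have : c*(d + (1 - c^2))/B < 0 := div_neg_of_pos_of_neg (by positivity) hBneg
    linarith
  have hLnn : 0 ≤ -(c*d/B + c*(1 - c^2)/B) /
      Real.sqrt (2 * ((1 - c^2 - d^2)/B) * (d/B + (1 - c^2)/B)) :=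
    div_nonneg hnum (Real.sqrt_nonneg _)
  have hkey : 1/2 + (c^2*d/B - 1) / (2 * ((1 - c^2 - d^2)/B))
      = (-(c*d/B + c*(1 - c^2)/B) /
          Real.sqrt (2 * ((1 - c^2 - d^2)/B) * (d/B + (1 - c^2)/B)))^2 := by
    rw [div_pow, Real.sq_sqrt hrpos.le]
    show _ = _
    field_simp [hBne]
    ring
  rw [hkey, Real.sqrt_sq hLnn]

theorem stmt11 (u v w : ℝ) (hu : 3 ≤ u) (hv : 3 ≤ v) (hw : 3 ≤ w)
    (hdet : (CSmatrix u v w).det ≠ 0)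
    {V : Type*} [AddCommGroup V] [Module ℝ V]
    (Bf : LinearMap.BilinForm ℝ V)
    (hsymm : ∀ x y : V, Bf x y = Bf y x)
    (a : Fin 4 → V)
    (hGram : ∀ i j : Fin 4, Bf (a i) (a j) = CSinv u v w i j)
    (huw : u = w) (hBneg : (CSmatrix u v w).det < 0)
    (h1 : cos (π/v) ^ 2 < sin (π/u) ^ 2)
    (f : V) (hf : f = a 1 + a 2) :
    CSinv u v w 3 3 < 0 ∧ CSinv u v w 1 2 + CSinv u v w 2 2 < 0 ∧
    -Bf (a 3) f / Real.sqrt (Bf (a 3) (a 3) * Bf f f) =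
      -(CSinv u v w 1 3 + CSinv u v w 2 3) /
        Real.sqrt (2 * CSinv u v w 3 3 * (CSinv u v w 1 2 + CSinv u v w 2 2)) ∧
    -(CSinv u v w 1 3 + CSinv u v w 2 3) /
        Real.sqrt (2 * CSinv u v w 3 3 * (CSinv u v w 1 2 + CSinv u v w 2 2)) =
      Real.sqrt (1/2 + (CSinv u v w 0 3 - 1) / (2 * CSinv u v w 3 3)) := by
  subst huw hf
  have hBneg' : (1 - cos (π/u)^2)^2 - cos (π/v)^2 < 0 := csdet_eq u v ▸ hBneg
  have hu0 : (0:ℝ) < u := by linarith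
  have hv0 : (0:ℝ) < v := by linarith
  have hcpos : 0 < cos (π/u) := by
    apply Real.cos_pos_of_mem_Ioo
    constructor
    · have : 0 < π/u := div_pos Real.pi_pos hu0
      linarith [Real.pi_pos]
    · rw [div_lt_div_iff₀ hu0 (by norm_num : (0:ℝ) < 2)]
      nlinarith [Real.pi_pos]
  have hdpos : 0 < cos (π/v) := by
    apply Real.cos_pos_of_mem_Ioo
    constructor
    · have : 0 < π/v := div_pos Real.pi_pos hv0
      linarith [Real.pi_pos]
    · rw [div_lt_div_iff₀ hv0 (by norm_num : (0:ℝ) < 2)]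
      nlinarith [Real.pi_pos]
  have hsin : Real.sin (π/u)^2 = 1 - cos (π/u)^2 := by
    have := Real.sin_sq_add_cos_sq (π/u); linarith
  have hk1 : 0 < 1 - cos (π/u)^2 - cos (π/v)^2 := by
    rw [hsin] at h1; nlinarith
  have hk2 : 0 < cos (π/v) + (1 - cos (π/u)^2) := by nlinarith
  have hG1 : CSinv u v u 3 3 < 0 := by
    rw [cse33 u v hdet]; exact div_neg_of_pos_of_neg hk1 hBneg'
  have hG2 : CSinv u v u 1 2 + CSinv u v u 2 2 < 0 := by
    rw [cse12 u v hdet, cse22 u v hdet, ← add_div]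
    exact div_neg_of_pos_of_neg hk2 hBneg'
  refine ⟨hG1, hG2, ?_, ?_⟩
  · have h3f : Bf (a 3) (a 1 + a 2) = CSinv u v u 3 1 + CSinv u v u 3 2 := by
      rw [map_add, hGram 3 1, hGram 3 2]
    have hff : Bf (a 1 + a 2) (a 1 + a 2)
        = CSinv u v u 1 1 + CSinv u v u 1 2 + CSinv u v u 2 1 + CSinv u v u 2 2 := by
      simp only [map_add, LinearMap.add_apply, hGram]
      ring
    rw [h3f, hff, hGram 3 3, cse31 u v hdet, cse32 u v hdet, cse13 u v hdet,
      cse23 u v hdet, cse11 u v hdet, cse12 u v hdet, cse21 u v hdet,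
      cse22 u v hdet, cse33 u v hdet]
    congr 2
    ring
  · rw [cse13 u v hdet, cse23 u v hdet, cse12 u v hdet, cse22 u v hdet,
      cse33 u v hdet, cse03 u v hdet]
    exact sqrt_key (cos (π/u)) (cos (π/v)) hcpos hdpos hk1 hBneg'
end
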